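/- If X is countably α-compact and Y is α-compact (every α-open cover has a finite subcover), then the product X × Y is countably compact. -/
import Mathlib


def AlphaOpen {X : Type*} [TopologicalSpace X] (A : Set X) : Prop :=
  A ⊆ interior (closure (interior A))

def AlphaClosed {X : Type*} [TopologicalSpace X] (A : Set X) : Prop :=
  AlphaOpen Aᶜ

def AlphaContinuous {X Y : Type*} [TopologicalSpace X] [TopologicalSpace Y]
    (f : X → Y) : Prop :=
  ∀ V : Set Y, IsOpen V → AlphaOpen (f ⁻¹' V)

def CountablyAlphaCompact (X : Type*) [TopologicalSpace X] : Prop :=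
  ∀ U : ℕ → Set X, (∀ n, AlphaOpen (U n)) → (⋃ n, U n) = Set.univ →
    ∃ t : Finset ℕ, (⋃ n ∈ t, U n) = Set.univ

def AlphaCompact (X : Type*) [TopologicalSpace X] : Prop :=
  ∀ 𝒰 : Set (Set X), (∀ A ∈ 𝒰, AlphaOpen A) → ⋃₀ 𝒰 = Set.univ →
    ∃ 𝒱 ⊆ 𝒰, 𝒱.Finite ∧ ⋃₀ 𝒱 = Set.univ

def CountablyCompact (X : Type*) [TopologicalSpace X] : Prop :=
  ∀ U : ℕ → Set X, (∀ n, IsOpen (U n)) → (⋃ n, U n) = Set.univ →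
    ∃ t : Finset ℕ, (⋃ n ∈ t, U n) = Set.univ

lemma alphaOpen_of_isOpen {X : Type*} [TopologicalSpace X] {A : Set X}
    (h : IsOpen A) : AlphaOpen A := by
  unfold AlphaOpen
  rw [h.interior_eq]
  exact interior_maximal subset_closure h

lemma compact_univ_of_alphaCompact {Y : Type*} [TopologicalSpace Y]
    (hY : AlphaCompact Y) : IsCompact (Set.univ : Set Y) := by
  apply isCompact_of_finite_subcover
  intro ι U hU hcov
  classical
  obtain ⟨𝒱, h𝒱sub, h𝒱fin, h𝒱cov⟩ := hY (Set.range U)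
    (by rintro A ⟨i, rfl⟩; exact alphaOpen_of_isOpen (hU i))
    (by rw [Set.sUnion_range]; exact Set.eq_univ_of_univ_subset hcov)
  -- choose an index for each member of 𝒱
  choose f hf using fun V (hV : V ∈ 𝒱) => h𝒱sub hV
  have : ∃ t : Finset ι, ∀ V ∈ 𝒱, ∃ i ∈ t, U i = V := by
    refine ⟨(h𝒱fin.toFinset.attach.image fun V =>
      f V.1 (h𝒱fin.mem_toFinset.mp V.2)), ?_⟩
    intro V hV
    refine ⟨f V hV, ?_, hf V hV⟩
    exact Finset.mem_image.mpr ⟨⟨V, h𝒱fin.mem_toFinset.mpr hV⟩, Finset.mem_attach _ _, rfl⟩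
  obtain ⟨t, ht⟩ := this
  refine ⟨t, fun y _ => ?_⟩
  have hy : y ∈ ⋃₀ 𝒱 := h𝒱cov ▸ Set.mem_univ y
  obtain ⟨V, hV, hyV⟩ := hy
  obtain ⟨i, hit, rfl⟩ := ht V hV
  exact Set.mem_biUnion hit hyV

theorem stmt17 {X Y : Type*} [TopologicalSpace X] [TopologicalSpace Y]
    (hX : CountablyAlphaCompact X) (hY : AlphaCompact Y) :
    CountablyCompact (X × Y) := by
  intro U hU hcov
  have hYc : IsCompact (Set.univ : Set Y) := compact_univ_of_alphaCompact hY
  let e : Finset ℕ ≃ ℕ := Denumerable.eqv (Finset ℕ)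
  -- tube sets indexed by codes of finite subsets of ℕ
  set W : ℕ → Set X := fun n =>
    {x | ∀ y : Y, (x, y) ∈ ⋃ m ∈ e.symm n, U m} with hW
  have hWopen : ∀ n, IsOpen (W n) := by
    intro n
    rw [isOpen_iff_forall_mem_open]
    intro x hx
    have hopen : IsOpen (⋃ m ∈ e.symm n, U m) :=
      isOpen_biUnion fun m _ => hU m
    have hsub : ({x} : Set X) ×ˢ (Set.univ : Set Y) ⊆
        ⋃ m ∈ e.symm n, U m := by
      rintro ⟨a, b⟩ ⟨ha, -⟩
      rcases ha with rfl
      exact hx b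
    obtain ⟨u, v, hu, hv, hxu, hYv, huv⟩ :=
      generalized_tube_lemma isCompact_singleton hYc hopen hsub
    refine ⟨u, fun a ha y => huv ⟨ha, hYv (Set.mem_univ y)⟩, hu, hxu rfl⟩
  have hWcov : (⋃ n, W n) = Set.univ := by
    apply Set.eq_univ_of_forall
    intro x
    -- {x} × Y is compact, covered by U, finite subcover
    have hcomp : IsCompact (({x} : Set X) ×ˢ (Set.univ : Set Y)) :=
      isCompact_singleton.prod hYc
    have hsub : ({x} : Set X) ×ˢ (Set.univ : Set Y) ⊆ ⋃ n, U n := by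
      rw [hcov]; exact Set.subset_univ _
    obtain ⟨t, ht⟩ := hcomp.elim_finite_subcover U hU hsub
    refine Set.mem_iUnion.mpr ⟨e t, ?_⟩
    intro y
    simp only [Equiv.symm_apply_apply]
    exact ht ⟨rfl, Set.mem_univ y⟩
  obtain ⟨s, hs⟩ := hX W (fun n => alphaOpen_of_isOpen (hWopen n)) hWcov
  refine ⟨s.biUnion (fun n => e.symm n), ?_⟩
  apply Set.eq_univ_of_forall
  rintro ⟨x, y⟩
  have hx : x ∈ ⋃ n ∈ s, W n := hs ▸ Set.mem_univ x
  obtain ⟨n, hns, hxn⟩ := Set.mem_iUnion₂.mp hx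
  have hxy := hxn y
  obtain ⟨m, hm, hmem⟩ := Set.mem_iUnion₂.mp hxy
  exact Set.mem_biUnion (Finset.mem_biUnion.mpr ⟨n, hns, hm⟩) hmem
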